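/- Let V be a finite-dimensional real inner product space with an orthogonal splitting V = V⁺ ⊕ V⁻, dim V⁺ = 1, and fix λ ∈ ℝ and α > 0. For each t > 0 let A_t be a linear map on V preserving the splitting with A_t v = e^{λ t} v for v ∈ V⁺ and ‖A_t|_{V⁻}‖ ≤ e^{(λ − α) t}. Let P, P' ∈ End(V) with ‖P‖ ≤ 1 and im P ⊆ V⁻. If ‖A_t ∘ P‖ = ‖A_t ∘ P'‖ for all t > 0, then im P' ⊆ V⁻. -/

import Mathlib

/-- growth-rate comparison: if A_t scales the one-dimensional V⁺ by
e^{λt} and contracts V⁻ = V⁺ᗮ by at most e^{(λ−α)t}, ‖P‖ ≤ 1 with im P ⊆ V⁻, and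
‖A_t ∘ P‖ = ‖A_t ∘ P'‖ for all t > 0, then im P' ⊆ V⁻. -/
theorem stmt_14 {V : Type*} [NormedAddCommGroup V] [InnerProductSpace ℝ V]
    [FiniteDimensional ℝ V] (Vp : Submodule ℝ V) (hVp : Module.finrank ℝ Vp = 1)
    (lam α : ℝ) (hα : 0 < α)
    (At : ℝ → (V →L[ℝ] V))
    (hAp : ∀ t > (0 : ℝ), ∀ v ∈ Vp, At t v = Real.exp (lam * t) • v)
    (hAm : ∀ t > (0 : ℝ), ∀ v ∈ Vpᗮ,
      At t v ∈ Vpᗮ ∧ ‖At t v‖ ≤ Real.exp ((lam - α) * t) * ‖v‖)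
    (P P' : V →L[ℝ] V) (hP : ‖P‖ ≤ 1)
    (hPrange : LinearMap.range (P : V →ₗ[ℝ] V) ≤ Vpᗮ)
    (heq : ∀ t > (0 : ℝ), ‖(At t).comp P‖ = ‖(At t).comp P'‖) :
    LinearMap.range (P' : V →ₗ[ℝ] V) ≤ Vpᗮ := by
  intro w hw
  obtain ⟨v, rfl⟩ := hw
  set x : V := P' v with hx
  set p : V := (Vp.orthogonalProjection x : V) with hp
  have hpmem : p ∈ Vp := (Vp.orthogonalProjection x).2
  have hmmem : x - p ∈ Vpᗮ := Submodule.sub_starProjection_mem_orthogonal (K := Vp) x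
  have key : ∀ t > (0 : ℝ), ‖p‖ ≤ Real.exp (-(α * t)) * ‖v‖ := by
    intro t ht
    -- upper bound on the operator norm of At t ∘ P
    have hb : ‖(At t).comp P‖ ≤ Real.exp ((lam - α) * t) := by
      apply ContinuousLinearMap.opNorm_le_bound _ (le_of_lt (Real.exp_pos _))
      intro y
      have hPy : P y ∈ Vpᗮ := hPrange ⟨y, rfl⟩
      calc ‖(At t).comp P y‖ = ‖At t (P y)‖ := rfl
        _ ≤ Real.exp ((lam - α) * t) * ‖P y‖ := (hAm t ht _ hPy).2
        _ ≤ Real.exp ((lam - α) * t) * (‖P‖ * ‖y‖) := by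
            gcongr
            exact P.le_opNorm y
        _ ≤ Real.exp ((lam - α) * t) * (1 * ‖y‖) := by
            gcongr
        _ = Real.exp ((lam - α) * t) * ‖y‖ := by ring
    -- lower bound on ‖At t x‖
    have hAx : At t x = Real.exp (lam * t) • p + At t (x - p) := by
      conv_lhs => rw [show x = p + (x - p) by abel]
      rw [map_add, hAp t ht p hpmem]
    have hbmem : At t (x - p) ∈ Vpᗮ := (hAm t ht _ hmmem).1
    have hamem : Real.exp (lam * t) • p ∈ Vp := Vp.smul_mem _ hpmem
    have hinner : (inner ℝ (Real.exp (lam * t) • p) (At t (x - p)) : ℝ) = 0 :=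
      (Submodule.mem_orthogonal _ _).1 hbmem _ hamem
    have hpyth := norm_add_sq_real (Real.exp (lam * t) • p) (At t (x - p))
    rw [hinner] at hpyth
    have hlow : Real.exp (lam * t) * ‖p‖ ≤ ‖At t x‖ := by
      have h1 : ‖Real.exp (lam * t) • p‖ = Real.exp (lam * t) * ‖p‖ := by
        rw [norm_smul, Real.norm_eq_abs, abs_of_pos (Real.exp_pos _)]
      rw [hAx]
      nlinarith [norm_nonneg (Real.exp (lam * t) • p + At t (x - p)),
        norm_nonneg (Real.exp (lam * t) • p), norm_nonneg (At t (x - p)),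
        sq_nonneg (‖At t (x - p)‖)]
    have hup : ‖At t x‖ ≤ Real.exp ((lam - α) * t) * ‖v‖ := by
      calc ‖At t x‖ = ‖(At t).comp P' v‖ := rfl
        _ ≤ ‖(At t).comp P'‖ * ‖v‖ := ((At t).comp P').le_opNorm v
        _ = ‖(At t).comp P‖ * ‖v‖ := by rw [heq t ht]
        _ ≤ Real.exp ((lam - α) * t) * ‖v‖ := by gcongr
    have hchain : Real.exp (lam * t) * ‖p‖ ≤
        Real.exp (lam * t) * (Real.exp (-(α * t)) * ‖v‖) := by
      have : Real.exp ((lam - α) * t) = Real.exp (lam * t) * Real.exp (-(α * t)) := by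
        rw [← Real.exp_add]; ring_nf
      calc Real.exp (lam * t) * ‖p‖ ≤ ‖At t x‖ := hlow
        _ ≤ Real.exp ((lam - α) * t) * ‖v‖ := hup
        _ = Real.exp (lam * t) * (Real.exp (-(α * t)) * ‖v‖) := by rw [this]; ring
    exact le_of_mul_le_mul_left hchain (Real.exp_pos _)
  -- let t → ∞
  have hlim : Filter.Tendsto (fun t : ℝ => Real.exp (-(α * t)) * ‖v‖)
      Filter.atTop (nhds 0) := by
    have h1 : Filter.Tendsto (fun t : ℝ => α * t) Filter.atTop Filter.atTop :=
      Filter.Tendsto.const_mul_atTop hα Filter.tendsto_id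
    have h2 : Filter.Tendsto (fun t : ℝ => Real.exp (-(α * t))) Filter.atTop (nhds 0) :=
      Real.tendsto_exp_neg_atTop_nhds_zero.comp h1
    simpa using h2.mul_const ‖v‖
  have hple : ‖p‖ ≤ 0 := by
    refine ge_of_tendsto hlim ?_
    filter_upwards [Filter.eventually_gt_atTop (0 : ℝ)] with t ht
    exact key t ht
  have hp0 : p = 0 := norm_le_zero_iff.1 hple
  have := hmmem
  rw [hp0, sub_zero] at this
  exact this
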